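/- Suppose c and c̄ are null Cartan curves in Minkowski 4-space, c̄(φ(s)) = c(s) + α(s)W₁(s) where W̄₁(φ(s)) = ±W₁(s) for all s and φ is a reparametrization. Then α' = 0, i.e., α is constant. -/

import Mathlib

noncomputable section

/-- Minkowski inner product on ℝ⁴ with signature (-,+,+,+). -/
def mink (x y : Fin 4 → ℝ) : ℝ := -(x 0 * y 0) + x 1 * y 1 + x 2 * y 2 + x 3 * y 3

lemma mink_smul_left (r : ℝ) (x y : Fin 4 → ℝ) : mink (r • x) y = r * mink x y := by
  simp [mink]; ring

lemma mink_add_left (x y z : Fin 4 → ℝ) : mink (x + y) z = mink x z + mink y z := by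
  simp [mink]; ring

lemma mink_sub_left (x y z : Fin 4 → ℝ) : mink (x - y) z = mink x z - mink y z := by
  simp [mink]; ring

lemma mink_neg_right (x y : Fin 4 → ℝ) : mink x (-y) = -mink x y := by
  simp [mink]; ring

/-- If `c̄(φ(s)) = c(s) + α(s) W₁(s)` is a Bertrand mate of `c`
(principal normals coincide: `W̄₁(φ(s)) = ± W₁(s)`), then `α' = 0`, i.e. `α`
is a constant function. -/
theorem stmt2 (c c' L N W₁ W₂ L' W₁' : ℝ → (Fin 4 → ℝ)) (k₁ : ℝ → ℝ)
    (α φ : ℝ → ℝ)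
    (hα : Differentiable ℝ α) (hφ : Differentiable ℝ φ)
    -- frame of c:
    (hcL : ∀ s, deriv c s = L s)
    (hLfr : ∀ s, deriv L s = W₁ s)
    (hW₁fr : ∀ s, deriv W₁ s = -(k₁ s) • L s - N s)
    (hLL : ∀ s, mink (L s) (L s) = 0) (hLN : ∀ s, mink (L s) (N s) = 1)
    (hLW₁ : ∀ s, mink (L s) (W₁ s) = 0) (hW₁W₁ : ∀ s, mink (W₁ s) (W₁ s) = 1)
    (hNW₁ : ∀ s, mink (N s) (W₁ s) = 0)
    (hW₁smooth : Differentiable ℝ W₁)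
    -- frame of the mate c̄ (written c'): tangent and orthogonality:
    (hmate : ∀ s, deriv (fun t => c' (φ t)) s = deriv φ s • L' (φ s))
    (hL'W₁' : ∀ x, mink (L' x) (W₁' x) = 0)
    -- Bertrand condition: the mate and coinciding principal normals:
    (hpair : ∀ s, c' (φ s) = c s + α s • W₁ s)
    (hnormals : ∀ s, W₁' (φ s) = W₁ s ∨ W₁' (φ s) = -W₁ s) :
    ∀ s, deriv α s = 0 := by
  intro s
  -- c is differentiable at s since its derivative is nonzero
  have hLne : L s ≠ 0 := by
    intro h
    have := hLN s
    rw [h] at this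
    simp [mink] at this
  have hcdiff : DifferentiableAt ℝ c s := by
    apply differentiableAt_of_deriv_ne_zero
    rw [hcL s]; exact hLne
  -- derivative of the mate equation
  have hfun : (fun t => c' (φ t)) = fun t => c t + α t • W₁ t := funext hpair
  have hsmul : DifferentiableAt ℝ (fun t => α t • W₁ t) s :=
    (hα s).smul (hW₁smooth s)
  have hE : deriv φ s • L' (φ s)
      = L s + (deriv α s • W₁ s + α s • (-(k₁ s) • L s - N s)) := by
    rw [← hmate s, hfun, deriv_fun_add hcdiff hsmul, hcL s,
      deriv_fun_smul (hα s) (hW₁smooth s), hW₁fr s]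
    ring_nf
  -- pair with W₁' (φ s)
  have hmE := congrArg (fun v => mink v (W₁' (φ s))) hE
  simp only [mink_add_left, mink_sub_left, mink_smul_left] at hmE
  rw [hL'W₁', mul_zero] at hmE
  rcases hnormals s with h | h <;> rw [h] at hmE <;>
    simp only [mink_neg_right, hLW₁, hW₁W₁, hNW₁] at hmE <;> linarith
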